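/- Let k_0 ≥ 1 and set n = k_0 + 1. Let X_0 be an n×k_0 real matrix of rank k_0, and for indices i, j let X_i (n×k_i) and X_j (n×k_j) be real design matrices, and let h_i : ℝ^{k_i} → [0,∞) and h_j : ℝ^{k_j} → [0,∞) be probability densities that are symmetric about the origin (h(−u) = h(u)). For each index l define the marginal likelihood m_l(y) = ∫_0^∞ ∫_{ℝ^{k_0}} ∫_{ℝ^{k_l}} N_n(y | X_0 β_0 + X_l β, σ² I_n) · σ^{−1−k_l} h_l(β/σ) dβ dβ_0 dσ, and define m_0(y) = ∫_0^∞ ∫_{ℝ^{k_0}} N_n(y | X_0 β_0, σ² I_n) · σ^{−1} dβ_0 dσ. Then for every y ∈ ℝⁿ not lying in the column space of X_0, m_i(y) = m_j(y) = m_0(y), all being finite. -/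

import Mathlib

open MeasureTheory Filter Topology Real Matrix ENNReal Set


/-- The multivariate normal density `N_n(y | μ, σ² I_n)` on `ℝⁿ`. -/
noncomputable def isoNormalDensity {n : ℕ} (y μ : Fin n → ℝ) (σ : ℝ) : ℝ :=
  (2 * Real.pi * σ ^ 2) ^ (-(n : ℝ) / 2) *
    Real.exp (-(∑ j, (y j - μ j) ^ 2) / (2 * σ ^ 2))

/-- Marginal likelihood of a model with extra regressors `Xl` under the prior
`π(β₀, β, σ) = σ^{-1-k_l} h_l(β/σ)`. -/
noncomputable def marginalLikelihood {n k0 kl : ℕ}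
    (X0 : Matrix (Fin n) (Fin k0) ℝ) (Xl : Matrix (Fin n) (Fin kl) ℝ)
    (h : (Fin kl → ℝ) → ℝ) (y : Fin n → ℝ) : ℝ≥0∞ :=
  ∫⁻ σ in Set.Ioi (0:ℝ), ∫⁻ β0 : Fin k0 → ℝ, ∫⁻ β : Fin kl → ℝ,
    ENNReal.ofReal
      (isoNormalDensity y (X0 *ᵥ β0 + Xl *ᵥ β) σ *
        (σ ^ (-(1 : ℝ) - (kl : ℝ)) * h (σ⁻¹ • β)))

/-- Marginal likelihood of the null model under the right-Haar prior `σ⁻¹`. -/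
noncomputable def nullMarginalLikelihood {n k0 : ℕ}
    (X0 : Matrix (Fin n) (Fin k0) ℝ) (y : Fin n → ℝ) : ℝ≥0∞ :=
  ∫⁻ σ in Set.Ioi (0:ℝ), ∫⁻ β0 : Fin k0 → ℝ,
    ENNReal.ofReal (isoNormalDensity y (X0 *ᵥ β0) σ * σ⁻¹)


namespace EPMaux

lemma measurable_mulVec {m k : ℕ} (M : Matrix (Fin m) (Fin k) ℝ) :
    Measurable fun v : Fin k → ℝ => M *ᵥ v := by
  apply measurable_pi_lambda
  intro j
  simp only [Matrix.mulVec, dotProduct]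
  exact Finset.measurable_sum _ fun i _ => ((measurable_pi_apply i).const_mul _)

lemma measurable_dot {m : ℕ} (w : Fin m → ℝ) :
    Measurable fun v : Fin m → ℝ => w ⬝ᵥ v := by
  simp only [dotProduct]
  exact Finset.measurable_sum _ fun i _ => ((measurable_pi_apply i).const_mul _)

lemma lintegral_comp_smul {k : ℕ} {g : (Fin k → ℝ) → ℝ≥0∞} (hg : Measurable g)
    {c : ℝ} (hc : c ≠ 0) :
    ∫⁻ x : Fin k → ℝ, g (c • x) = ENNReal.ofReal (|c|⁻¹ ^ k) * ∫⁻ x, g x := by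
  have hmap := Measure.map_addHaar_smul (volume : Measure (Fin k → ℝ)) hc
  calc ∫⁻ x : Fin k → ℝ, g (c • x)
      = ∫⁻ y, g y ∂(Measure.map (c • ·) volume) :=
        (lintegral_map hg (measurable_const_smul c)).symm
    _ = ENNReal.ofReal (|c|⁻¹ ^ k) * ∫⁻ x, g x := by
        rw [hmap, lintegral_smul_measure]
        congr 2
        rw [abs_inv, abs_pow]
        simp [Module.finrank_pi]

lemma lintegral_comp_neg {k : ℕ} {g : (Fin k → ℝ) → ℝ≥0∞} (hg : Measurable g) :
    ∫⁻ x : Fin k → ℝ, g (-x) = ∫⁻ x, g x := by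
  rw [← lintegral_map hg measurable_neg, Measure.map_neg_eq_self]

lemma lintegral_comp_const_sub {k : ℕ} {g : (Fin k → ℝ) → ℝ≥0∞} (hg : Measurable g)
    (γ : Fin k → ℝ) :
    ∫⁻ x : Fin k → ℝ, g (γ - x) = ∫⁻ x, g x := by
  have h1 : Measurable fun z : Fin k → ℝ => g (γ + z) := hg.comp (measurable_const_add γ)
  calc ∫⁻ x : Fin k → ℝ, g (γ - x) = ∫⁻ x, (fun z => g (γ + z)) (-x) := by
        simp [sub_eq_add_neg]
    _ = ∫⁻ x, g (γ + x) := lintegral_comp_neg h1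
    _ = ∫⁻ x, g x := lintegral_add_left_eq_self _ γ

lemma lintegral_image_1d {s : Set ℝ} {f f' : ℝ → ℝ} (hs : MeasurableSet s)
    (hf' : ∀ x ∈ s, HasDerivWithinAt f (f' x) s x) (hf : Set.InjOn f s) (g : ℝ → ℝ≥0∞) :
    ∫⁻ x in f '' s, g x = ∫⁻ x in s, ENNReal.ofReal |f' x| * g (f x) := by
  simpa only [ContinuousLinearMap.det_toSpanSingleton] using
    lintegral_image_eq_lintegral_abs_det_fderiv_mul volume hs
      (fun x hx => (hf' x hx).hasFDerivWithinAt) hf g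


noncomputable def Kint (c : ℝ) : ℝ≥0∞ :=
  ∫⁻ t in Set.Ioi (0:ℝ), ENNReal.ofReal (Real.exp (-(t - c)^2 / 2))

lemma measurable_Kint : Measurable Kint := by
  apply Measurable.lintegral_prod_right'
    (f := fun p : ℝ × ℝ => ENNReal.ofReal (Real.exp (-(p.2 - p.1)^2 / 2)))
  apply Measurable.ennreal_ofReal
  fun_prop

lemma lintegral_gauss (c : ℝ) :
    ∫⁻ t : ℝ, ENNReal.ofReal (Real.exp (-(t - c)^2 / 2)) =
      ENNReal.ofReal (Real.sqrt (2 * π)) := by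
  have h0 : ∀ x : ℝ, -(x - c)^2/2 = -(1/2 : ℝ) * (x - c)^2 := fun x => by ring
  have h1 : Integrable (fun t : ℝ => Real.exp (-(t - c)^2 / 2)) := by
    simp only [h0]
    exact (integrable_exp_neg_mul_sq (by norm_num : (0:ℝ) < 1/2)).comp_sub_right c
  rw [← ofReal_integral_eq_lintegral_ofReal h1 (ae_of_all _ fun t => (Real.exp_pos _).le)]
  congr 1
  have h2 : ∫ t : ℝ, Real.exp (-(t - c)^2/2) = ∫ t : ℝ, Real.exp (-(1/2:ℝ) * t^2) := by
    simp only [h0]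
    exact integral_sub_right_eq_self (fun t => Real.exp (-(1/2:ℝ) * t^2)) c
  rw [h2, integral_gaussian]
  norm_num
  ring

lemma Kint_add_Kint_neg (c : ℝ) :
    Kint c + Kint (-c) = ENNReal.ofReal (Real.sqrt (2 * π)) := by
  have himg : (fun x : ℝ => -x) '' Set.Ioi (0:ℝ) = Set.Iio 0 := by
    ext t
    simp only [Set.mem_image, Set.mem_Ioi, Set.mem_Iio]
    constructor
    · rintro ⟨σ, hσ, rfl⟩; linarith
    · intro ht; exact ⟨-t, by linarith, by ring⟩
  have h1 : Kint (-c) = ∫⁻ x in Set.Iio (0:ℝ), ENNReal.ofReal (Real.exp (-(x - c)^2 / 2)) := by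
    rw [← himg, lintegral_image_1d measurableSet_Ioi
        (fun x _ => (hasDerivAt_neg x).hasDerivWithinAt)
        (fun x _ y _ hxy => by linarith [neg_injective hxy]) ]
    · unfold Kint
      apply setLIntegral_congr_fun measurableSet_Ioi
      intro x hx
      beta_reduce
      have : (-x - c)^2 = (x - -c)^2 := by ring
      simp [this]
  have h2 : Kint c = ∫⁻ x in Set.Ici (0:ℝ), ENNReal.ofReal (Real.exp (-(x - c)^2 / 2)) := by
    unfold Kint
    exact setLIntegral_congr Ioi_ae_eq_Ici
  rw [h1, h2, add_comm, ← compl_Iio, lintegral_add_compl _ measurableSet_Iio,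
    lintegral_gauss]

lemma Kint_zero : Kint 0 = ENNReal.ofReal (Real.sqrt (2 * π) / 2) := by
  have h := Kint_add_Kint_neg 0
  rw [neg_zero, ← two_mul] at h
  have h2 : Kint 0 = ENNReal.ofReal (Real.sqrt (2 * π)) / 2 :=
    (ENNReal.eq_div_iff two_ne_zero ENNReal.ofNat_ne_top).mpr h
  rw [h2, ENNReal.ofReal_div_of_pos (by norm_num), ENNReal.ofReal_ofNat]

lemma sigma_int_pos {a : ℝ} (ha : 0 < a) (c : ℝ) :
    ∫⁻ σ in Set.Ioi (0:ℝ),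
        ENNReal.ofReal (σ⁻¹^2) * ENNReal.ofReal (Real.exp (-(a/σ - c)^2 / 2)) =
      ENNReal.ofReal a⁻¹ * Kint c := by
  have himg : (fun σ : ℝ => a/σ) '' Set.Ioi 0 = Set.Ioi 0 := by
    ext t
    simp only [Set.mem_image, Set.mem_Ioi]
    constructor
    · rintro ⟨σ, hσ, rfl⟩; exact div_pos ha hσ
    · intro ht; exact ⟨a/t, div_pos ha ht, by field_simp⟩
  have hderiv : ∀ σ ∈ Set.Ioi (0:ℝ),
      HasDerivWithinAt (fun σ : ℝ => a/σ) (-(a / σ^2)) (Set.Ioi 0) σ := by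
    intro σ hσ
    have := ((hasDerivAt_inv (ne_of_gt hσ)).const_mul a).hasDerivWithinAt
      (s := Set.Ioi (0:ℝ))
    simpa [div_eq_mul_inv, neg_div, mul_comm] using this
  have hinj : Set.InjOn (fun σ : ℝ => a/σ) (Set.Ioi 0) := by
    intro x hx y hy hxy
    have hx0 : x ≠ 0 := ne_of_gt hx
    have hy0 : y ≠ 0 := ne_of_gt hy
    have hxy' : a / x = a / y := hxy
    rw [div_eq_div_iff hx0 hy0] at hxy'
    exact (mul_left_cancel₀ (ne_of_gt ha) hxy').symm
  have h3 : Kint c = ∫⁻ σ in Set.Ioi (0:ℝ),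
      ENNReal.ofReal |(-(a / σ^2))| * ENNReal.ofReal (Real.exp (-(a/σ - c)^2 / 2)) := by
    conv_lhs => rw [Kint, ← himg]
    rw [lintegral_image_1d measurableSet_Ioi hderiv hinj]
  rw [h3, ← lintegral_const_mul' _ _ ENNReal.ofReal_ne_top]
  apply setLIntegral_congr_fun measurableSet_Ioi
  intro σ hσ
  beta_reduce
  simp only [Set.mem_Ioi] at hσ
  rw [abs_neg, abs_of_pos (by positivity), ← mul_assoc,
    ← ENNReal.ofReal_mul (by positivity)]
  have h4 : a⁻¹ * (a / σ^2) = σ⁻¹^2 := by field_simp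
  rw [← ENNReal.ofReal_mul (by positivity), ← ENNReal.ofReal_mul (by positivity), h4]

lemma sigma_int {a : ℝ} (ha : a ≠ 0) :
    ∃ s : ℝ, (∀ x : ℝ, s * -x = -(s * x)) ∧ ∀ c : ℝ,
      ∫⁻ σ in Set.Ioi (0:ℝ),
          ENNReal.ofReal (σ⁻¹^2) * ENNReal.ofReal (Real.exp (-(a/σ - c)^2 / 2)) =
        ENNReal.ofReal |a|⁻¹ * Kint (s * c) := by
  rcases lt_or_gt_of_ne ha with hneg | hpos
  · refine ⟨-1, fun x => by ring, fun c => ?_⟩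
    have h2 : (∫⁻ σ in Set.Ioi (0:ℝ),
        ENNReal.ofReal (σ⁻¹^2) * ENNReal.ofReal (Real.exp (-(a/σ - c)^2 / 2)))
        = ∫⁻ σ in Set.Ioi (0:ℝ),
        ENNReal.ofReal (σ⁻¹^2) * ENNReal.ofReal (Real.exp (-((-a)/σ - (-1 * c))^2 / 2)) := by
      apply lintegral_congr
      intro σ
      rw [show -(a/σ - c)^2/2 = -((-a)/σ - (-1 * c))^2/2 from by ring]
    rw [h2, sigma_int_pos (by linarith : (0:ℝ) < -a) (-1 * c), abs_of_neg hneg]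
  · refine ⟨1, fun x => by ring, fun c => ?_⟩
    simp only [one_mul]
    rw [sigma_int_pos hpos c, abs_of_pos hpos]

lemma symm_int {kl : ℕ} (h : (Fin kl → ℝ) → ℝ) (h_pos : ∀ u, 0 ≤ h u)
    (h_meas : Measurable h) (h_prob : ∫ u, h u = 1) (h_symm : ∀ u, h (-u) = h u)
    (t : (Fin kl → ℝ) → ℝ) (ht_meas : Measurable t) (ht_neg : ∀ u, t (-u) = -(t u)) :
    ∫⁻ u, ENNReal.ofReal (h u) * Kint (t u) = ENNReal.ofReal (Real.sqrt (2*π) / 2) := by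
  have hint : Integrable h := by
    by_contra hc
    rw [integral_undef hc] at h_prob
    norm_num at h_prob
  have hl : ∫⁻ u, ENNReal.ofReal (h u) = 1 := by
    rw [← ofReal_integral_eq_lintegral_ofReal hint (ae_of_all _ h_pos), h_prob,
      ENNReal.ofReal_one]
  have hmeasF : Measurable fun u => ENNReal.ofReal (h u) * Kint (t u) :=
    (h_meas.ennreal_ofReal).mul (measurable_Kint.comp ht_meas)
  have hmeasF2 : Measurable fun u => ENNReal.ofReal (h u) * Kint (-(t u)) :=
    (h_meas.ennreal_ofReal).mul (measurable_Kint.comp ht_meas.neg)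
  have hI' : ∫⁻ u, ENNReal.ofReal (h u) * Kint (t u)
      = ∫⁻ u, ENNReal.ofReal (h u) * Kint (-(t u)) := by
    calc ∫⁻ u, ENNReal.ofReal (h u) * Kint (t u)
        = ∫⁻ u, (fun v => ENNReal.ofReal (h v) * Kint (t v)) (-u) :=
          (lintegral_comp_neg hmeasF).symm
      _ = ∫⁻ u, ENNReal.ofReal (h u) * Kint (-(t u)) := by
          apply lintegral_congr
          intro u
          simp only [h_symm, ht_neg]
  have hsum : (∫⁻ u, ENNReal.ofReal (h u) * Kint (t u))
      + ∫⁻ u, ENNReal.ofReal (h u) * Kint (t u)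
      = ENNReal.ofReal (Real.sqrt (2*π)) := by
    nth_rewrite 2 [hI']
    rw [← lintegral_add_left hmeasF]
    calc (∫⁻ u, (ENNReal.ofReal (h u) * Kint (t u)
            + ENNReal.ofReal (h u) * Kint (-(t u))))
        = ∫⁻ u, ENNReal.ofReal (h u) * ENNReal.ofReal (Real.sqrt (2*π)) := by
          apply lintegral_congr
          intro u
          rw [← mul_add, Kint_add_Kint_neg]
      _ = ENNReal.ofReal (Real.sqrt (2*π)) := by
          rw [lintegral_mul_const' _ _ ENNReal.ofReal_ne_top, hl, one_mul]
  have h2 : ∫⁻ u, ENNReal.ofReal (h u) * Kint (t u)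
      = ENNReal.ofReal (Real.sqrt (2*π)) / 2 := by
    refine (ENNReal.eq_div_iff two_ne_zero ENNReal.ofNat_ne_top).mpr ?_
    rw [two_mul]
    exact hsum
  rw [h2, ENNReal.ofReal_div_of_pos (by norm_num), ENNReal.ofReal_ofNat]

noncomputable def Jint {n k : ℕ} (M : Matrix (Fin n) (Fin k) ℝ) : ℝ≥0∞ :=
  ∫⁻ b : Fin k → ℝ, ENNReal.ofReal (Real.exp (-(∑ j, ((M *ᵥ b) j)^2) / 2))

lemma Jint_lt_top {n k : ℕ} (hk : 1 ≤ k) (M : Matrix (Fin n) (Fin k) ℝ)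
    (hM : M.rank = k) : Jint M < ⊤ := by
  have hinj : Function.Injective M.mulVecLin := by
    rw [← LinearMap.ker_eq_bot]
    have h := LinearMap.finrank_range_add_finrank_ker M.mulVecLin
    rw [show Module.finrank ℝ (LinearMap.range M.mulVecLin) = k from hM,
      Module.finrank_pi, Fintype.card_fin] at h
    have h0 : Module.finrank ℝ (LinearMap.ker M.mulVecLin) = 0 := by omega
    exact Submodule.finrank_eq_zero.mp h0
  obtain ⟨K, hK0, hKa⟩ := (LinearMap.injective_iff_antilipschitz M.mulVecLin).mp hinj
  have hKpos : (0:ℝ) < (K:ℝ) := hK0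
  set δ : ℝ := 1/(2 * (K:ℝ)^2 * k) with hδdef
  have hδ : 0 < δ := by positivity
  have hbound : ∀ b : Fin k → ℝ,
      Real.exp (-(∑ j, ((M *ᵥ b) j)^2) / 2) ≤ ∏ j, Real.exp (-δ * (b j)^2) := by
    intro b
    rw [← Real.exp_sum]
    apply Real.exp_le_exp.mpr
    have h1 : ∑ j, (b j)^2 ≤ (k:ℝ) * ‖b‖^2 := by
      calc ∑ j, (b j)^2 ≤ ∑ _j : Fin k, ‖b‖^2 := by
            apply Finset.sum_le_sum
            intro j _
            have := norm_le_pi_norm b j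
            have h0 : (0:ℝ) ≤ |b j| := abs_nonneg _
            calc (b j)^2 = |b j|^2 := (sq_abs _).symm
              _ ≤ ‖b‖^2 := by
                  apply pow_le_pow_left₀ h0 this
        _ = (k:ℝ) * ‖b‖^2 := by simp [Finset.sum_const, nsmul_eq_mul]
    have h2 : ‖b‖ ≤ (K:ℝ) * ‖M *ᵥ b‖ := by
      have := hKa.le_mul_dist b 0
      simpa [Matrix.mulVecLin_apply, dist_zero_right] using this
    have h3 : ‖M *ᵥ b‖^2 ≤ ∑ j, ((M *ᵥ b) j)^2 := by
      set v := M *ᵥ b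
      have hnn : (0:ℝ) ≤ Real.sqrt (∑ j, (v j)^2) := Real.sqrt_nonneg _
      have hle : ‖v‖ ≤ Real.sqrt (∑ j, (v j)^2) := by
        apply pi_norm_le_iff_of_nonneg hnn |>.mpr
        intro i
        rw [Real.norm_eq_abs, ← Real.sqrt_sq_eq_abs]
        apply Real.sqrt_le_sqrt
        exact Finset.single_le_sum (f := fun j => (v j)^2)
          (fun j _ => sq_nonneg _) (Finset.mem_univ i)
      calc ‖v‖^2 ≤ (Real.sqrt (∑ j, (v j)^2))^2 := by
            apply pow_le_pow_left₀ (norm_nonneg _) hle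
        _ = ∑ j, (v j)^2 := Real.sq_sqrt (Finset.sum_nonneg fun j _ => sq_nonneg _)
    have hb2 : ‖b‖^2 ≤ (K:ℝ)^2 * ‖M *ᵥ b‖^2 := by
      calc ‖b‖^2 ≤ ((K:ℝ) * ‖M *ᵥ b‖)^2 :=
            pow_le_pow_left₀ (norm_nonneg _) h2 2
        _ = (K:ℝ)^2 * ‖M *ᵥ b‖^2 := by ring
    have hkpos : (0:ℝ) < (k:ℝ) := by exact_mod_cast hk
    have key : δ * ∑ j, (b j)^2 ≤ (∑ j, ((M *ᵥ b) j)^2) / 2 := by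
      rw [hδdef]
      rw [div_mul_eq_mul_div, one_mul]
      rw [div_le_div_iff₀ (by positivity) (by norm_num)]
      have e1 := mul_le_mul_of_nonneg_left hb2 (le_of_lt hkpos)
      have e2 := mul_le_mul_of_nonneg_left h3
        (by positivity : (0:ℝ) ≤ (k:ℝ) * (K:ℝ)^2)
      nlinarith [h1, e1, e2]
    have hsum : ∑ x : Fin k, -δ * (b x)^2 = -(δ * ∑ j, (b j)^2) := by
      rw [← Finset.mul_sum]; ring
    rw [hsum]
    linarith [key]
  have hgint : Integrable (fun b : Fin k → ℝ => ∏ j, Real.exp (-δ * (b j)^2)) :=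
    Integrable.fintype_prod (f := fun _ x => Real.exp (-δ * x^2))
      fun _ => integrable_exp_neg_mul_sq hδ
  calc Jint M ≤ ∫⁻ b : Fin k → ℝ, ENNReal.ofReal (∏ j, Real.exp (-δ * (b j)^2)) := by
        apply lintegral_mono
        intro b
        exact ENNReal.ofReal_le_ofReal (hbound b)
    _ < ⊤ := hgint.lintegral_lt_top

lemma exists_w {k0 : ℕ} (X0 : Matrix (Fin (k0+1)) (Fin k0) ℝ) (hX0 : X0.rank = k0) :
    ∃ w : Fin (k0+1) → ℝ, w ⬝ᵥ w = 1 ∧ (∀ β, w ⬝ᵥ (X0 *ᵥ β) = 0) ∧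
      (∀ c, w ⬝ᵥ c = 0 → ∃ γ, X0 *ᵥ γ = c) := by
  have hrankT : X0ᵀ.rank = k0 := by rw [Matrix.rank_transpose]; exact hX0
  have hker : Module.finrank ℝ (LinearMap.ker X0ᵀ.mulVecLin) = 1 := by
    have h := LinearMap.finrank_range_add_finrank_ker X0ᵀ.mulVecLin
    rw [show Module.finrank ℝ (LinearMap.range X0ᵀ.mulVecLin) = k0 from hrankT,
      Module.finrank_pi, Fintype.card_fin] at h
    omega
  have hkerne : LinearMap.ker X0ᵀ.mulVecLin ≠ ⊥ := by
    intro hbot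
    rw [hbot, finrank_bot] at hker
    omega
  obtain ⟨w0, hw0mem, hw0ne⟩ := Submodule.exists_mem_ne_zero_of_ne_bot hkerne
  have hw0T : w0 ᵥ* X0 = 0 := by
    simpa [Matrix.mulVecLin_apply] using (LinearMap.mem_ker.mp hw0mem)
  have hw0dot : ∀ β : Fin k0 → ℝ, w0 ⬝ᵥ (X0 *ᵥ β) = 0 := by
    intro β
    rw [Matrix.dotProduct_mulVec, hw0T, zero_dotProduct]
  have hw0sq : 0 < w0 ⬝ᵥ w0 := by
    have h0 : 0 ≤ w0 ⬝ᵥ w0 :=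
      Finset.sum_nonneg fun i _ => mul_self_nonneg _
    have hne : w0 ⬝ᵥ w0 ≠ 0 := fun h => hw0ne (dotProduct_self_eq_zero.mp h)
    exact lt_of_le_of_ne h0 (Ne.symm hne)
  set nrm : ℝ := Real.sqrt (w0 ⬝ᵥ w0) with hnrm
  have hnrmpos : 0 < nrm := Real.sqrt_pos.mpr hw0sq
  refine ⟨nrm⁻¹ • w0, ?_, ?_, ?_⟩
  · rw [smul_dotProduct, dotProduct_smul, smul_eq_mul, smul_eq_mul,
      ← mul_assoc, hnrm]
    rw [← Real.sqrt_mul_self (le_of_lt hw0sq)]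
    field_simp
    rw [Real.sq_sqrt (Real.sqrt_nonneg _)]
  · intro β
    rw [smul_dotProduct, hw0dot, smul_eq_mul, mul_zero]
  · set w : Fin (k0+1) → ℝ := nrm⁻¹ • w0 with hw
    have hwdot : ∀ β : Fin k0 → ℝ, w ⬝ᵥ (X0 *ᵥ β) = 0 := by
      intro β
      rw [hw, smul_dotProduct, hw0dot, smul_eq_mul, mul_zero]
    have hww : w ⬝ᵥ w = 1 := by
      rw [hw, smul_dotProduct, dotProduct_smul, smul_eq_mul, smul_eq_mul,
        ← mul_assoc, hnrm, ← Real.sqrt_mul_self (le_of_lt hw0sq)]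
      field_simp
      rw [Real.sq_sqrt (Real.sqrt_nonneg _)]
    have hwne : w ≠ 0 := by
      intro h
      rw [h, zero_dotProduct] at hww
      norm_num at hww
    set R : Submodule ℝ (Fin (k0+1) → ℝ) := LinearMap.range X0.mulVecLin with hR
    have hdR : ∀ v ∈ R, w ⬝ᵥ v = 0 := by
      intro v hv
      obtain ⟨β, rfl⟩ := hv
      exact hwdot β
    have hinf : R ⊓ (ℝ ∙ w) = ⊥ := by
      rw [Submodule.eq_bot_iff]
      intro x hx
      obtain ⟨hxR, hxs⟩ := Submodule.mem_inf.mp hx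
      obtain ⟨t, rfl⟩ := Submodule.mem_span_singleton.mp hxs
      have h0 : w ⬝ᵥ (t • w) = t := by
        rw [dotProduct_smul, hww, smul_eq_mul, mul_one]
      have h1 : w ⬝ᵥ (t • w) = 0 := hdR _ hxR
      rw [h0] at h1
      rw [h1, zero_smul]
    have hsup : R ⊔ (ℝ ∙ w) = ⊤ := by
      apply Submodule.eq_top_of_finrank_eq
      have h := Submodule.finrank_sup_add_finrank_inf_eq R (ℝ ∙ w)
      rw [hinf, finrank_bot, add_zero, finrank_span_singleton hwne,
        show Module.finrank ℝ R = k0 from hX0] at h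
      rw [h, Module.finrank_pi, Fintype.card_fin]
    intro c hc
    have hcmem : c ∈ R ⊔ (ℝ ∙ w) := by rw [hsup]; exact Submodule.mem_top
    obtain ⟨r, hrR, x, hxs, rfl⟩ := Submodule.mem_sup.mp hcmem
    obtain ⟨t, rfl⟩ := Submodule.mem_span_singleton.mp hxs
    have h0 : w ⬝ᵥ (r + t • w) = t := by
      rw [dotProduct_add, hdR r hrR, dotProduct_smul, hww, smul_eq_mul,
        mul_one, zero_add]
    rw [hc] at h0
    rw [← h0, zero_smul, add_zero]
    obtain ⟨γ, hγ⟩ := hrR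
    exact ⟨γ, hγ⟩

lemma key1 {k0 : ℕ} (X0 : Matrix (Fin (k0+1)) (Fin k0) ℝ)
    (w : Fin (k0+1) → ℝ) (hww : w ⬝ᵥ w = 1)
    (hw0 : ∀ β : Fin k0 → ℝ, w ⬝ᵥ (X0 *ᵥ β) = 0)
    (hwmem : ∀ c, w ⬝ᵥ c = 0 → ∃ γ, X0 *ᵥ γ = c)
    {σ : ℝ} (hσ : 0 < σ) (c : Fin (k0+1) → ℝ) :
    ∫⁻ β0 : Fin k0 → ℝ,
        ENNReal.ofReal (Real.exp (-(∑ j, (c j - (X0 *ᵥ β0) j)^2) / (2*σ^2)))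
      = ENNReal.ofReal (σ^k0 * Real.exp (-(w ⬝ᵥ c)^2 / (2*σ^2))) * Jint X0 := by
  have hσ0 : σ ≠ 0 := ne_of_gt hσ
  set α : ℝ := w ⬝ᵥ c with hα
  set r : Fin (k0+1) → ℝ := c - α • w with hrdef
  have hr : w ⬝ᵥ r = 0 := by
    rw [hrdef, dotProduct_sub, dotProduct_smul, hww, smul_eq_mul,
      mul_one, ← hα, sub_self]
  obtain ⟨γ, hγ⟩ := hwmem r hr
  have hww' : ∑ j, w j * w j = 1 := hww
  have hpyth : ∀ β0 : Fin k0 → ℝ,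
      ∑ j, (c j - (X0 *ᵥ β0) j)^2 = α^2 + ∑ j, ((X0 *ᵥ (γ - β0)) j)^2 := by
    intro β0
    have hXd : X0 *ᵥ (γ - β0) = r - X0 *ᵥ β0 := by rw [Matrix.mulVec_sub, hγ]
    have hwd : ∑ j, w j * (r j - (X0 *ᵥ β0) j) = 0 := by
      have h1 : w ⬝ᵥ (r - X0 *ᵥ β0) = 0 := by
        rw [dotProduct_sub, hr, hw0, sub_self]
      simpa [dotProduct, Pi.sub_apply] using h1
    have hcomp : ∀ j, c j - (X0 *ᵥ β0) j = α * w j + (r j - (X0 *ᵥ β0) j) := by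
      intro j
      simp only [hrdef, Pi.sub_apply, Pi.smul_apply, smul_eq_mul]
      ring
    calc ∑ j, (c j - (X0 *ᵥ β0) j)^2
        = ∑ j, (α * w j + (r j - (X0 *ᵥ β0) j))^2 := by
          exact Finset.sum_congr rfl fun j _ => by rw [hcomp j]
      _ = α^2 * (∑ j, w j * w j) + 2*α*(∑ j, w j * (r j - (X0 *ᵥ β0) j))
            + ∑ j, (r j - (X0 *ᵥ β0) j)^2 := by
          rw [Finset.mul_sum, Finset.mul_sum, ← Finset.sum_add_distrib,
            ← Finset.sum_add_distrib]
          exact Finset.sum_congr rfl fun j _ => by ring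
      _ = α^2 + ∑ j, (r j - (X0 *ᵥ β0) j)^2 := by
          rw [hwd, hww']; ring
      _ = α^2 + ∑ j, ((X0 *ᵥ (γ - β0)) j)^2 := by
          rw [hXd]; simp [Pi.sub_apply]
  have hmeasG : Measurable fun b : Fin k0 → ℝ =>
      ENNReal.ofReal (Real.exp (-(∑ j, ((X0 *ᵥ b) j)^2) / (2*σ^2))) := by
    apply Measurable.ennreal_ofReal
    apply Measurable.exp
    apply Measurable.div _ measurable_const
    apply Measurable.neg
    exact Finset.measurable_sum _ fun j _ =>
      (((measurable_mulVec X0).comp measurable_id).eval.pow_const 2)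
  calc ∫⁻ β0 : Fin k0 → ℝ,
        ENNReal.ofReal (Real.exp (-(∑ j, (c j - (X0 *ᵥ β0) j)^2) / (2*σ^2)))
      = ∫⁻ β0 : Fin k0 → ℝ, ENNReal.ofReal (Real.exp (-α^2 / (2*σ^2)))
          * ENNReal.ofReal (Real.exp (-(∑ j, ((X0 *ᵥ (γ - β0)) j)^2) / (2*σ^2))) := by
        apply lintegral_congr
        intro β0
        rw [hpyth β0, ← ENNReal.ofReal_mul (Real.exp_pos _).le, ← Real.exp_add]
        congr 2
        ring
    _ = ENNReal.ofReal (Real.exp (-α^2 / (2*σ^2)))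
          * ∫⁻ β0 : Fin k0 → ℝ,
            ENNReal.ofReal (Real.exp (-(∑ j, ((X0 *ᵥ (γ - β0)) j)^2) / (2*σ^2))) :=
        lintegral_const_mul' _ _ ENNReal.ofReal_ne_top
    _ = ENNReal.ofReal (Real.exp (-α^2 / (2*σ^2)))
          * ∫⁻ b : Fin k0 → ℝ,
            ENNReal.ofReal (Real.exp (-(∑ j, ((X0 *ᵥ b) j)^2) / (2*σ^2))) := by
        congr 1
        exact lintegral_comp_const_sub hmeasG γ
    _ = ENNReal.ofReal (Real.exp (-α^2 / (2*σ^2)))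
          * (ENNReal.ofReal (σ^k0) * Jint X0) := by
        congr 1
        have hGg : ∀ b : Fin k0 → ℝ,
            ENNReal.ofReal (Real.exp (-(∑ j, ((X0 *ᵥ b) j)^2) / (2*σ^2)))
            = (fun u : Fin k0 → ℝ =>
                ENNReal.ofReal (Real.exp (-(∑ j, ((X0 *ᵥ u) j)^2) / 2))) (σ⁻¹ • b) := by
          intro b
          simp only
          congr 1
          rw [Matrix.mulVec_smul]
          have hs : ∑ j, ((σ⁻¹ • (X0 *ᵥ b)) j)^2 = σ⁻¹^2 * ∑ j, ((X0 *ᵥ b) j)^2 := by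
            rw [Finset.mul_sum]
            exact Finset.sum_congr rfl fun j _ => by
              simp [Pi.smul_apply, smul_eq_mul]; ring
          rw [hs]
          field_simp
        have hmeasg : Measurable fun u : Fin k0 → ℝ =>
            ENNReal.ofReal (Real.exp (-(∑ j, ((X0 *ᵥ u) j)^2) / 2)) := by
          apply Measurable.ennreal_ofReal
          apply Measurable.exp
          apply Measurable.div _ measurable_const
          apply Measurable.neg
          exact Finset.measurable_sum _ fun j _ =>
            (((measurable_mulVec X0).comp measurable_id).eval.pow_const 2)
        calc ∫⁻ b : Fin k0 → ℝ,
              ENNReal.ofReal (Real.exp (-(∑ j, ((X0 *ᵥ b) j)^2) / (2*σ^2)))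
            = ∫⁻ b : Fin k0 → ℝ, (fun u : Fin k0 → ℝ =>
                ENNReal.ofReal (Real.exp (-(∑ j, ((X0 *ᵥ u) j)^2) / 2))) (σ⁻¹ • b) :=
              lintegral_congr hGg
          _ = ENNReal.ofReal (|σ⁻¹|⁻¹ ^ k0) * Jint X0 :=
              lintegral_comp_smul hmeasg (inv_ne_zero hσ0)
          _ = ENNReal.ofReal (σ^k0) * Jint X0 := by
              rw [abs_of_pos (inv_pos.mpr hσ), inv_inv]
    _ = ENNReal.ofReal (σ^k0 * Real.exp (-(w ⬝ᵥ c)^2 / (2*σ^2))) * Jint X0 := by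
        rw [← mul_assoc, ← ENNReal.ofReal_mul (Real.exp_pos _).le, mul_comm (Real.exp _), hα]

lemma rpow_base_fact (n : ℕ) {σ : ℝ} (hσ : 0 < σ) :
    (2*π*σ^2) ^ (-(n:ℝ)/2) = (2*π)^(-(n:ℝ)/2) * ((σ:ℝ)^n)⁻¹ := by
  rw [Real.mul_rpow (by positivity) (by positivity)]
  congr 1
  rw [← Real.rpow_natCast σ 2, ← Real.rpow_mul hσ.le,
    show ((2:ℕ):ℝ) * (-(n:ℝ)/2) = -(n:ℝ) by push_cast; ring,
    Real.rpow_neg hσ.le, Real.rpow_natCast]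

lemma rpow_exp_fact (kl : ℕ) {σ : ℝ} (hσ : 0 < σ) :
    σ ^ (-(1:ℝ) - (kl:ℝ)) = ((σ:ℝ)^(kl+1))⁻¹ := by
  rw [show -(1:ℝ) - (kl:ℝ) = -(((kl+1:ℕ):ℝ)) by push_cast; ring,
    Real.rpow_neg hσ.le, Real.rpow_natCast]

lemma null_eq {k0 : ℕ} (X0 : Matrix (Fin (k0+1)) (Fin k0) ℝ)
    (w : Fin (k0+1) → ℝ) (hww : w ⬝ᵥ w = 1)
    (hw0 : ∀ β : Fin k0 → ℝ, w ⬝ᵥ (X0 *ᵥ β) = 0)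
    (hwmem : ∀ c, w ⬝ᵥ c = 0 → ∃ γ, X0 *ᵥ γ = c)
    (y : Fin (k0+1) → ℝ) (ha : w ⬝ᵥ y ≠ 0) (hJ : Jint X0 ≠ ⊤) :
    nullMarginalLikelihood X0 y =
      Jint X0 * ENNReal.ofReal ((2*π) ^ (-((k0+1:ℕ):ℝ)/2))
        * (ENNReal.ofReal |w ⬝ᵥ y|⁻¹ * ENNReal.ofReal (Real.sqrt (2*π)/2)) := by
  set a : ℝ := w ⬝ᵥ y with hadef
  set J : ℝ≥0∞ := Jint X0 with hJdef
  set P : ℝ := (2*π) ^ (-((k0+1:ℕ):ℝ)/2) with hPdef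
  have hPpos : 0 < P := Real.rpow_pos_of_pos (by positivity) _
  have hstep : ∀ σ ∈ Set.Ioi (0:ℝ),
      (∫⁻ β0 : Fin k0 → ℝ,
        ENNReal.ofReal (isoNormalDensity y (X0 *ᵥ β0) σ * σ⁻¹))
      = (J * ENNReal.ofReal P) *
          (ENNReal.ofReal (σ⁻¹^2)
            * ENNReal.ofReal (Real.exp (-(a/σ - 0)^2 / 2))) := by
    intro σ hσ
    rw [Set.mem_Ioi] at hσ
    have hσ0 : σ ≠ 0 := ne_of_gt hσ
    have h1 : ∀ β0 : Fin k0 → ℝ,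
        ENNReal.ofReal (isoNormalDensity y (X0 *ᵥ β0) σ * σ⁻¹)
        = ENNReal.ofReal ((2*π*σ^2) ^ (-((k0+1:ℕ):ℝ)/2) * σ⁻¹)
          * ENNReal.ofReal (Real.exp (-(∑ j, (y j - (X0 *ᵥ β0) j)^2) / (2*σ^2))) := by
      intro β0
      rw [← ENNReal.ofReal_mul (by positivity)]
      congr 1
      rw [isoNormalDensity]
      push_cast
      ring
    calc (∫⁻ β0 : Fin k0 → ℝ,
        ENNReal.ofReal (isoNormalDensity y (X0 *ᵥ β0) σ * σ⁻¹))
        = ENNReal.ofReal ((2*π*σ^2) ^ (-((k0+1:ℕ):ℝ)/2) * σ⁻¹)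
          * ∫⁻ β0 : Fin k0 → ℝ,
            ENNReal.ofReal (Real.exp (-(∑ j, (y j - (X0 *ᵥ β0) j)^2) / (2*σ^2))) := by
          rw [← lintegral_const_mul' _ _ ENNReal.ofReal_ne_top]
          exact lintegral_congr h1
      _ = ENNReal.ofReal ((2*π*σ^2) ^ (-((k0+1:ℕ):ℝ)/2) * σ⁻¹)
          * (ENNReal.ofReal (σ^k0 * Real.exp (-a^2 / (2*σ^2))) * J) := by
          rw [key1 X0 w hww hw0 hwmem hσ y]
      _ = (J * ENNReal.ofReal P) *
          (ENNReal.ofReal (σ⁻¹^2)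
            * ENNReal.ofReal (Real.exp (-(a/σ - 0)^2 / 2))) := by
          have hexp : Real.exp (-a^2 / (2*σ^2)) = Real.exp (-(a/σ - 0)^2 / 2) := by
            congr 1
            rw [sub_zero, div_pow]
            ring
          have hreal : (2*π*σ^2) ^ (-((k0+1:ℕ):ℝ)/2) * σ⁻¹
              * (σ^k0 * Real.exp (-a^2 / (2*σ^2)))
              = P * (σ⁻¹^2 * Real.exp (-(a/σ - 0)^2 / 2)) := by
            rw [rpow_base_fact (k0+1) hσ, hexp, hPdef]
            field_simp
            ring
          calc ENNReal.ofReal ((2*π*σ^2) ^ (-((k0+1:ℕ):ℝ)/2) * σ⁻¹)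
                * (ENNReal.ofReal (σ^k0 * Real.exp (-a^2 / (2*σ^2))) * J)
              = J * ENNReal.ofReal ((2*π*σ^2) ^ (-((k0+1:ℕ):ℝ)/2) * σ⁻¹
                  * (σ^k0 * Real.exp (-a^2 / (2*σ^2)))) := by
                rw [← mul_assoc, ← ENNReal.ofReal_mul (by positivity)]
                ring
            _ = J * ENNReal.ofReal (P * (σ⁻¹^2 * Real.exp (-(a/σ - 0)^2 / 2))) := by
                rw [hreal]
            _ = (J * ENNReal.ofReal P) * (ENNReal.ofReal (σ⁻¹^2)
                  * ENNReal.ofReal (Real.exp (-(a/σ - 0)^2 / 2))) := by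
                rw [ENNReal.ofReal_mul (le_of_lt hPpos),
                  ENNReal.ofReal_mul (by positivity), mul_assoc]
  calc nullMarginalLikelihood X0 y
      = ∫⁻ σ in Set.Ioi (0:ℝ), (J * ENNReal.ofReal P) *
          (ENNReal.ofReal (σ⁻¹^2)
            * ENNReal.ofReal (Real.exp (-(a/σ - 0)^2 / 2))) := by
        rw [nullMarginalLikelihood]
        exact setLIntegral_congr_fun measurableSet_Ioi hstep
    _ = (J * ENNReal.ofReal P) * ∫⁻ σ in Set.Ioi (0:ℝ),
          ENNReal.ofReal (σ⁻¹^2)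
            * ENNReal.ofReal (Real.exp (-(a/σ - 0)^2 / 2)) := by
        exact lintegral_const_mul' _ _
          (ENNReal.mul_ne_top hJ ENNReal.ofReal_ne_top)
    _ = J * ENNReal.ofReal P
        * (ENNReal.ofReal |a|⁻¹ * ENNReal.ofReal (Real.sqrt (2*π)/2)) := by
        obtain ⟨s, _, hsint⟩ := sigma_int ha
        rw [hsint 0, mul_zero, Kint_zero]

lemma marg_eq {k0 kl : ℕ} (X0 : Matrix (Fin (k0+1)) (Fin k0) ℝ)
    (Xl : Matrix (Fin (k0+1)) (Fin kl) ℝ)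
    (h : (Fin kl → ℝ) → ℝ) (h_pos : ∀ u, 0 ≤ h u) (h_meas : Measurable h)
    (h_prob : ∫ u, h u = 1) (h_symm : ∀ u, h (-u) = h u)
    (w : Fin (k0+1) → ℝ) (hww : w ⬝ᵥ w = 1)
    (hw0 : ∀ β : Fin k0 → ℝ, w ⬝ᵥ (X0 *ᵥ β) = 0)
    (hwmem : ∀ c, w ⬝ᵥ c = 0 → ∃ γ, X0 *ᵥ γ = c)
    (y : Fin (k0+1) → ℝ) (ha : w ⬝ᵥ y ≠ 0) (hJ : Jint X0 ≠ ⊤) :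
    marginalLikelihood X0 Xl h y =
      Jint X0 * ENNReal.ofReal ((2*π) ^ (-((k0+1:ℕ):ℝ)/2))
        * (ENNReal.ofReal |w ⬝ᵥ y|⁻¹ * ENNReal.ofReal (Real.sqrt (2*π)/2)) := by
  set a : ℝ := w ⬝ᵥ y with hadef
  set J : ℝ≥0∞ := Jint X0 with hJdef
  set P : ℝ := (2*π) ^ (-((k0+1:ℕ):ℝ)/2) with hPdef
  have hPpos : 0 < P := Real.rpow_pos_of_pos (by positivity) _
  set t : (Fin kl → ℝ) → ℝ := fun u => w ⬝ᵥ (Xl *ᵥ u) with htdef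
  have ht_meas : Measurable t := (measurable_dot w).comp (measurable_mulVec Xl)
  have ht_neg : ∀ u, t (-u) = -(t u) := by
    intro u
    rw [htdef]
    simp only [Matrix.mulVec_neg, dotProduct_neg]
  have hstep : ∀ σ ∈ Set.Ioi (0:ℝ),
      (∫⁻ β0 : Fin k0 → ℝ, ∫⁻ β : Fin kl → ℝ,
        ENNReal.ofReal (isoNormalDensity y (X0 *ᵥ β0 + Xl *ᵥ β) σ *
          (σ ^ (-(1:ℝ) - (kl:ℝ)) * h (σ⁻¹ • β))))
      = (J * ENNReal.ofReal P) *
          ∫⁻ u : Fin kl → ℝ, ENNReal.ofReal (σ⁻¹^2)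
            * ENNReal.ofReal (Real.exp (-(a/σ - t u)^2 / 2) * h u) := by
    intro σ hσ
    rw [Set.mem_Ioi] at hσ
    have hσ0 : σ ≠ 0 := ne_of_gt hσ
    have hepow : (0:ℝ) ≤ σ ^ (-(1:ℝ) - (kl:ℝ)) := Real.rpow_nonneg hσ.le _
    set c : (Fin kl → ℝ) → (Fin (k0+1) → ℝ) := fun β => y - Xl *ᵥ β with hcdef
    set Dσ : ℝ := (2*π*σ^2) ^ (-((k0+1:ℕ):ℝ)/2) with hDdef
    have hDpos : 0 < Dσ := Real.rpow_pos_of_pos (by positivity) _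
    set g : (Fin kl → ℝ) → ℝ≥0∞ :=
      fun u => ENNReal.ofReal (Real.exp (-(a/σ - t u)^2 / 2) * h u) with hgdef
    have hg_meas : Measurable g := by
      apply Measurable.ennreal_ofReal
      apply Measurable.mul _ h_meas
      apply Measurable.exp
      exact (((measurable_const.sub ht_meas).pow_const 2).neg.div_const 2)
    have hmeas_big : Measurable (Function.uncurry
        fun (β0 : Fin k0 → ℝ) (β : Fin kl → ℝ) =>
        ENNReal.ofReal (isoNormalDensity y (X0 *ᵥ β0 + Xl *ᵥ β) σ *
          (σ ^ (-(1:ℝ) - (kl:ℝ)) * h (σ⁻¹ • β)))) := by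
      apply Measurable.ennreal_ofReal
      apply Measurable.mul
      · unfold isoNormalDensity
        apply Measurable.mul measurable_const
        apply Measurable.exp
        apply Measurable.div _ measurable_const
        apply Measurable.neg
        apply Finset.measurable_sum
        intro j _
        have hμ : Measurable fun p : (Fin k0 → ℝ) × (Fin kl → ℝ) =>
            X0 *ᵥ p.1 + Xl *ᵥ p.2 :=
          ((measurable_mulVec X0).comp measurable_fst).add
            ((measurable_mulVec Xl).comp measurable_snd)
        exact (measurable_const.sub hμ.eval).pow_const 2
      · exact (measurable_const.mul
          (h_meas.comp (measurable_const_smul σ⁻¹))).comp measurable_snd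
    have hβ0int : ∀ β : Fin kl → ℝ,
        (∫⁻ β0 : Fin k0 → ℝ,
          ENNReal.ofReal (isoNormalDensity y (X0 *ᵥ β0 + Xl *ᵥ β) σ *
            (σ ^ (-(1:ℝ) - (kl:ℝ)) * h (σ⁻¹ • β))))
        = ENNReal.ofReal (Dσ * (σ ^ (-(1:ℝ) - (kl:ℝ)) * h (σ⁻¹ • β)))
            * (ENNReal.ofReal (σ^k0 * Real.exp (-(w ⬝ᵥ c β)^2 / (2*σ^2))) * J) := by
      intro β
      have hptwise : ∀ β0 : Fin k0 → ℝ,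
          ENNReal.ofReal (isoNormalDensity y (X0 *ᵥ β0 + Xl *ᵥ β) σ *
            (σ ^ (-(1:ℝ) - (kl:ℝ)) * h (σ⁻¹ • β)))
          = ENNReal.ofReal (Dσ * (σ ^ (-(1:ℝ) - (kl:ℝ)) * h (σ⁻¹ • β)))
            * ENNReal.ofReal (Real.exp (-(∑ j, (c β j - (X0 *ᵥ β0) j)^2) / (2*σ^2))) := by
        intro β0
        rw [← ENNReal.ofReal_mul
          (mul_nonneg hDpos.le (mul_nonneg hepow (h_pos _)))]
        congr 1
        rw [isoNormalDensity]
        have hsum : ∑ j, (y j - (X0 *ᵥ β0 + Xl *ᵥ β) j)^2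
            = ∑ j, (c β j - (X0 *ᵥ β0) j)^2 := by
          apply Finset.sum_congr rfl
          intro j _
          rw [hcdef]
          simp only [Pi.add_apply, Pi.sub_apply]
          ring
        rw [hsum, hDdef]
        push_cast
        ring
      rw [lintegral_congr hptwise, lintegral_const_mul' _ _ ENNReal.ofReal_ne_top,
        key1 X0 w hww hw0 hwmem hσ (c β)]
    have hreal2 : ∀ β : Fin kl → ℝ,
        ENNReal.ofReal (Dσ * (σ ^ (-(1:ℝ) - (kl:ℝ)) * h (σ⁻¹ • β)))
          * (ENNReal.ofReal (σ^k0 * Real.exp (-(w ⬝ᵥ c β)^2 / (2*σ^2))) * J)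
        = (J * ENNReal.ofReal (P * σ⁻¹^2 * σ⁻¹^kl)) * g (σ⁻¹ • β) := by
      intro β
      have h1 : w ⬝ᵥ c β = a - t β := by
        rw [hcdef, htdef]
        simp only
        rw [dotProduct_sub]
      have h2 : t (σ⁻¹ • β) = σ⁻¹ * t β := by
        rw [htdef]
        simp only [Matrix.mulVec_smul, dotProduct_smul, smul_eq_mul]
      have h3 : Real.exp (-(w ⬝ᵥ c β)^2/(2*σ^2))
          = Real.exp (-(a/σ - t (σ⁻¹ • β))^2/2) := by
        rw [h1, h2]
        congr 1
        have h4 : (a - t β)/σ = a/σ - σ⁻¹ * t β := by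
          rw [sub_div]
          ring
        rw [← h4, div_pow]
        field_simp
      have hRR : Dσ * (σ ^ (-(1:ℝ) - (kl:ℝ)) * h (σ⁻¹ • β))
            * (σ^k0 * Real.exp (-(a/σ - t (σ⁻¹ • β))^2/2))
          = (P * σ⁻¹^2 * σ⁻¹^kl)
            * (Real.exp (-(a/σ - t (σ⁻¹ • β))^2/2) * h (σ⁻¹ • β)) := by
        rw [hDdef, rpow_base_fact (k0+1) hσ, rpow_exp_fact kl hσ, hPdef]
        field_simp
        have hk : σ^kl * σ⁻¹^kl = 1 := by rw [← mul_pow, mul_inv_cancel₀ hσ0, one_pow]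
        linear_combination (-(σ^2*σ^k0*h ((1/σ) • β))) * hk
      calc ENNReal.ofReal (Dσ * (σ ^ (-(1:ℝ) - (kl:ℝ)) * h (σ⁻¹ • β)))
            * (ENNReal.ofReal (σ^k0 * Real.exp (-(w ⬝ᵥ c β)^2 / (2*σ^2))) * J)
          = J * ENNReal.ofReal (Dσ * (σ ^ (-(1:ℝ) - (kl:ℝ)) * h (σ⁻¹ • β))
              * (σ^k0 * Real.exp (-(w ⬝ᵥ c β)^2 / (2*σ^2)))) := by
            rw [← mul_assoc, ← ENNReal.ofReal_mul
              (mul_nonneg hDpos.le (mul_nonneg hepow (h_pos _)))]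
            ring
        _ = J * ENNReal.ofReal ((P * σ⁻¹^2 * σ⁻¹^kl)
              * (Real.exp (-(a/σ - t (σ⁻¹ • β))^2/2) * h (σ⁻¹ • β))) := by
            rw [h3, hRR]
        _ = (J * ENNReal.ofReal (P * σ⁻¹^2 * σ⁻¹^kl)) * g (σ⁻¹ • β) := by
            rw [hgdef]
            simp only
            rw [ENNReal.ofReal_mul (by positivity), ← mul_assoc]
    calc (∫⁻ β0 : Fin k0 → ℝ, ∫⁻ β : Fin kl → ℝ,
          ENNReal.ofReal (isoNormalDensity y (X0 *ᵥ β0 + Xl *ᵥ β) σ *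
            (σ ^ (-(1:ℝ) - (kl:ℝ)) * h (σ⁻¹ • β))))
        = ∫⁻ β : Fin kl → ℝ, ∫⁻ β0 : Fin k0 → ℝ,
            ENNReal.ofReal (isoNormalDensity y (X0 *ᵥ β0 + Xl *ᵥ β) σ *
              (σ ^ (-(1:ℝ) - (kl:ℝ)) * h (σ⁻¹ • β))) :=
          lintegral_lintegral_swap hmeas_big.aemeasurable
      _ = ∫⁻ β : Fin kl → ℝ,
            (J * ENNReal.ofReal (P * σ⁻¹^2 * σ⁻¹^kl)) * g (σ⁻¹ • β) := by
          apply lintegral_congr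
          intro β
          rw [hβ0int β, hreal2 β]
      _ = (J * ENNReal.ofReal (P * σ⁻¹^2 * σ⁻¹^kl))
            * ∫⁻ β : Fin kl → ℝ, g (σ⁻¹ • β) :=
          lintegral_const_mul' _ _ (ENNReal.mul_ne_top hJ ENNReal.ofReal_ne_top)
      _ = (J * ENNReal.ofReal (P * σ⁻¹^2 * σ⁻¹^kl))
            * (ENNReal.ofReal (|σ⁻¹|⁻¹^kl) * ∫⁻ u, g u) := by
          rw [lintegral_comp_smul hg_meas (inv_ne_zero hσ0)]
      _ = (J * ENNReal.ofReal P) * (ENNReal.ofReal (σ⁻¹^2) * ∫⁻ u, g u) := by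
          rw [abs_of_pos (inv_pos.mpr hσ), inv_inv]
          rw [show (J * ENNReal.ofReal (P * σ⁻¹^2 * σ⁻¹^kl))
              * (ENNReal.ofReal (σ^kl) * ∫⁻ u, g u)
              = J * ((ENNReal.ofReal (P * σ⁻¹^2 * σ⁻¹^kl) * ENNReal.ofReal (σ^kl))
                * ∫⁻ u, g u) from by ring]
          rw [← ENNReal.ofReal_mul (by positivity)]
          rw [show (P * σ⁻¹^2 * σ⁻¹^kl) * σ^kl = P * σ⁻¹^2 from by
            field_simp
            rw [← mul_pow, one_div, inv_mul_cancel₀ hσ0, one_pow]]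
          rw [ENNReal.ofReal_mul hPpos.le]
          ring
      _ = (J * ENNReal.ofReal P) *
          ∫⁻ u : Fin kl → ℝ, ENNReal.ofReal (σ⁻¹^2)
            * ENNReal.ofReal (Real.exp (-(a/σ - t u)^2 / 2) * h u) := by
          rw [lintegral_const_mul' _ _ ENNReal.ofReal_ne_top]
  have hmeas2 : Measurable (Function.uncurry
      fun (σ : ℝ) (u : Fin kl → ℝ) =>
      ENNReal.ofReal (σ⁻¹^2)
        * ENNReal.ofReal (Real.exp (-(a/σ - t u)^2 / 2) * h u)) := by
    show Measurable fun p : ℝ × (Fin kl → ℝ) => ENNReal.ofReal (p.1⁻¹^2)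
      * ENNReal.ofReal (Real.exp (-(a/p.1 - t p.2)^2 / 2) * h p.2)
    refine Measurable.mul (f := fun p : ℝ × (Fin kl → ℝ) => ENNReal.ofReal (p.1⁻¹^2))
      (g := fun p => ENNReal.ofReal (Real.exp (-(a/p.1 - t p.2)^2 / 2) * h p.2)) ?_ ?_
    · exact ((measurable_fst.inv.pow_const 2)).ennreal_ofReal
    · apply Measurable.ennreal_ofReal
      apply Measurable.mul _ (h_meas.comp measurable_snd)
      apply Measurable.exp
      exact ((((measurable_const.div measurable_fst).sub
        (ht_meas.comp measurable_snd)).pow_const 2).neg.div_const 2)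
  obtain ⟨s, hs, hsint⟩ := sigma_int ha
  calc marginalLikelihood X0 Xl h y
      = ∫⁻ σ in Set.Ioi (0:ℝ), (J * ENNReal.ofReal P) *
          ∫⁻ u : Fin kl → ℝ, ENNReal.ofReal (σ⁻¹^2)
            * ENNReal.ofReal (Real.exp (-(a/σ - t u)^2 / 2) * h u) := by
        rw [marginalLikelihood]
        exact setLIntegral_congr_fun measurableSet_Ioi hstep
    _ = (J * ENNReal.ofReal P) * ∫⁻ σ in Set.Ioi (0:ℝ),
          ∫⁻ u : Fin kl → ℝ, ENNReal.ofReal (σ⁻¹^2)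
            * ENNReal.ofReal (Real.exp (-(a/σ - t u)^2 / 2) * h u) :=
        lintegral_const_mul' _ _ (ENNReal.mul_ne_top hJ ENNReal.ofReal_ne_top)
    _ = (J * ENNReal.ofReal P) * ∫⁻ u : Fin kl → ℝ,
          ∫⁻ σ in Set.Ioi (0:ℝ), ENNReal.ofReal (σ⁻¹^2)
            * ENNReal.ofReal (Real.exp (-(a/σ - t u)^2 / 2) * h u) := by
        congr 1
        exact lintegral_lintegral_swap hmeas2.aemeasurable
    _ = (J * ENNReal.ofReal P) * ∫⁻ u : Fin kl → ℝ,
          ENNReal.ofReal (h u) * (ENNReal.ofReal |a|⁻¹ * Kint (s * t u)) := by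
        congr 1
        apply lintegral_congr
        intro u
        calc (∫⁻ σ in Set.Ioi (0:ℝ), ENNReal.ofReal (σ⁻¹^2)
              * ENNReal.ofReal (Real.exp (-(a/σ - t u)^2 / 2) * h u))
            = ∫⁻ σ in Set.Ioi (0:ℝ), ENNReal.ofReal (h u) * (ENNReal.ofReal (σ⁻¹^2)
                * ENNReal.ofReal (Real.exp (-(a/σ - t u)^2 / 2))) := by
              apply lintegral_congr
              intro σ
              rw [ENNReal.ofReal_mul (Real.exp_pos _).le]
              ring
          _ = ENNReal.ofReal (h u) * ∫⁻ σ in Set.Ioi (0:ℝ), ENNReal.ofReal (σ⁻¹^2)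
                * ENNReal.ofReal (Real.exp (-(a/σ - t u)^2 / 2)) :=
              lintegral_const_mul' _ _ ENNReal.ofReal_ne_top
          _ = ENNReal.ofReal (h u) * (ENNReal.ofReal |a|⁻¹ * Kint (s * t u)) := by
              rw [hsint (t u)]
    _ = (J * ENNReal.ofReal P) * (ENNReal.ofReal |a|⁻¹
          * ∫⁻ u : Fin kl → ℝ, ENNReal.ofReal (h u) * Kint ((fun v => s * t v) u)) := by
        congr 1
        rw [← lintegral_const_mul' _ _ (ENNReal.ofReal_ne_top (r := |a|⁻¹))]
        apply lintegral_congr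
        intro u
        simp only
        ring
    _ = J * ENNReal.ofReal P
        * (ENNReal.ofReal |a|⁻¹ * ENNReal.ofReal (Real.sqrt (2*π)/2)) := by
        rw [symm_int h h_pos h_meas h_prob h_symm _ (ht_meas.const_mul s)
          (fun u => by show s * t (-u) = -(s * t u); rw [ht_neg u]; exact hs (t u))]

end EPMaux


/-- Result 2 of the paper (exact predictive matching at the minimal sample
size `n* = k₀ + 1`): all model/prior pairs, including the null model, have
identical, finite marginal densities for samples of size `k₀ + 1`. -/
theorem exact_predictive_matching_minimal_sample
    (k0 ki kj : ℕ) (hk0 : 1 ≤ k0)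
    (X0 : Matrix (Fin (k0 + 1)) (Fin k0) ℝ) (hX0 : X0.rank = k0)
    (Xi : Matrix (Fin (k0 + 1)) (Fin ki) ℝ)
    (Xj : Matrix (Fin (k0 + 1)) (Fin kj) ℝ)
    (hi : (Fin ki → ℝ) → ℝ) (hj : (Fin kj → ℝ) → ℝ)
    (hi_pos : ∀ u, 0 ≤ hi u) (hj_pos : ∀ u, 0 ≤ hj u)
    (hi_meas : Measurable hi) (hj_meas : Measurable hj)
    (hi_prob : ∫ u : Fin ki → ℝ, hi u = 1) (hj_prob : ∫ u : Fin kj → ℝ, hj u = 1)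
    (hi_symm : ∀ u, hi (-u) = hi u) (hj_symm : ∀ u, hj (-u) = hj u)
    (y : Fin (k0 + 1) → ℝ) (hy : ∀ β0 : Fin k0 → ℝ, X0 *ᵥ β0 ≠ y) :
    marginalLikelihood X0 Xi hi y = nullMarginalLikelihood X0 y ∧
    marginalLikelihood X0 Xj hj y = nullMarginalLikelihood X0 y ∧
    nullMarginalLikelihood X0 y < ⊤ := by
  obtain ⟨w, hww, hw0, hwmem⟩ := EPMaux.exists_w X0 hX0
  have ha : w ⬝ᵥ y ≠ 0 := by
    intro h0
    obtain ⟨γ, hγ⟩ := hwmem y h0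
    exact hy γ hγ
  have hJ : EPMaux.Jint X0 ≠ ⊤ := (EPMaux.Jint_lt_top hk0 X0 hX0).ne
  have hnull := EPMaux.null_eq X0 w hww hw0 hwmem y ha hJ
  refine ⟨?_, ?_, ?_⟩
  · rw [EPMaux.marg_eq X0 Xi hi hi_pos hi_meas hi_prob hi_symm w hww hw0 hwmem y ha hJ,
      hnull]
  · rw [EPMaux.marg_eq X0 Xj hj hj_pos hj_meas hj_prob hj_symm w hww hw0 hwmem y ha hJ,
      hnull]
  · rw [hnull]
    apply ENNReal.mul_lt_top
    · apply ENNReal.mul_lt_top hJ.lt_top ENNReal.ofReal_lt_top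
    · exact ENNReal.mul_lt_top ENNReal.ofReal_lt_top ENNReal.ofReal_lt_top
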